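/- If λ_max(β) denotes the largest generalized eigenvalue of K ξ = λ (M + βM_Γ) ξ and Δt_crit(β) = 2/√(λ_max(β)), then β ≥ 0 implies Δt_crit(β) ≥ Δt_crit(0), i.e. adding the positive semidefinite mass-scaling term never decreases the critical time step. -/

import Mathlib

open Matrix

/-- The set of generalized Rayleigh quotients ξᵀAξ/(ξᵀBξ) over nonzero ξ. -/
def rayleighSet {n : ℕ} (A B : Matrix (Fin n) (Fin n) ℝ) : Set ℝ :=
  {r : ℝ | ∃ ξ : Fin n → ℝ, ξ ≠ 0 ∧ r = (ξ ⬝ᵥ A.mulVec ξ) / (ξ ⬝ᵥ B.mulVec ξ)}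

/-- Quadratic forms scale by `a²` under scaling of the vector. -/
lemma quad_smul {n : ℕ} (A : Matrix (Fin n) (Fin n) ℝ) (a : ℝ) (ξ : Fin n → ℝ) :
    (a • ξ) ⬝ᵥ A.mulVec (a • ξ) = a * a * (ξ ⬝ᵥ A.mulVec ξ) := by
  rw [Matrix.mulVec_smul, smul_dotProduct, dotProduct_smul]
  simp [smul_eq_mul, mul_assoc]

/-- A nonzero real PSD matrix has a vector with positive quadratic form. -/
lemma exists_pos_quad {n : ℕ} {K : Matrix (Fin n) (Fin n) ℝ}
    (hK : K.PosSemidef) (hK0 : K ≠ 0) :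
    ∃ ξ : Fin n → ℝ, ξ ≠ 0 ∧ 0 < ξ ⬝ᵥ K.mulVec ξ := by
  by_contra h
  push_neg at h
  apply hK0
  have hz : ∀ ξ : Fin n → ℝ, K.mulVec ξ = 0 := by
    intro ξ
    rcases eq_or_ne ξ 0 with rfl | hne
    · simp
    · have h1 : ξ ⬝ᵥ K.mulVec ξ ≤ 0 := h ξ hne
      have h2 : 0 ≤ ξ ⬝ᵥ K.mulVec ξ := by simpa using hK.dotProduct_mulVec_nonneg ξ
      have : star ξ ⬝ᵥ K.mulVec ξ = 0 := by simpa using le_antisymm h1 h2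
      exact (hK.dotProduct_mulVec_zero_iff ξ).mp this
  ext i j
  have := congrFun (hz (Pi.single j 1)) i
  simpa using this

/-- The Rayleigh quotients of `K` w.r.t. a positive definite `M` are bounded above. -/
lemma rayleigh_bddAbove {n : ℕ} (K M : Matrix (Fin n) (Fin n) ℝ)
    (hM : M.PosDef) :
    ∃ C : ℝ, ∀ ξ : Fin n → ℝ, ξ ≠ 0 →
      (ξ ⬝ᵥ K.mulVec ξ) / (ξ ⬝ᵥ M.mulVec ξ) ≤ C := by
  rcases Nat.eq_zero_or_pos n with rfl | hn
  · exact ⟨0, fun ξ hξ => absurd (Subsingleton.elim ξ 0) hξ⟩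
  have hsph : IsCompact (Metric.sphere (0 : Fin n → ℝ) 1) := isCompact_sphere 0 1
  have hne : (Metric.sphere (0 : Fin n → ℝ) 1).Nonempty := by
    haveI : Nonempty (Fin n) := ⟨⟨0, hn⟩⟩
    exact NormedSpace.sphere_nonempty.mpr (by norm_num)
  set f : (Fin n → ℝ) → ℝ := fun ξ => (ξ ⬝ᵥ K.mulVec ξ) / (ξ ⬝ᵥ M.mulVec ξ) with hf
  have hnum : Continuous fun ξ : Fin n → ℝ => ξ ⬝ᵥ K.mulVec ξ :=
    continuous_id.dotProduct (continuous_const.matrix_mulVec continuous_id)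
  have hden : Continuous fun ξ : Fin n → ℝ => ξ ⬝ᵥ M.mulVec ξ :=
    continuous_id.dotProduct (continuous_const.matrix_mulVec continuous_id)
  have hpos : ∀ ξ : Fin n → ℝ, ξ ≠ 0 → 0 < ξ ⬝ᵥ M.mulVec ξ := by
    intro ξ hξ; simpa using hM.dotProduct_mulVec_pos hξ
  have hcont : ContinuousOn f (Metric.sphere (0 : Fin n → ℝ) 1) := by
    apply hnum.continuousOn.div hden.continuousOn
    intro x hx
    have hx0 : x ≠ 0 := by
      intro h0
      rw [Metric.mem_sphere, h0] at hx
      simp at hx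
    exact ne_of_gt (hpos x hx0)
  obtain ⟨u, hu, hmax'⟩ := hsph.exists_isMaxOn hne hcont
  have hmax : ∀ x ∈ Metric.sphere (0 : Fin n → ℝ) 1, f x ≤ f u := fun x hx => hmax' hx
  refine ⟨f u, fun ξ hξ => ?_⟩
  have hnorm : ‖ξ‖ ≠ 0 := norm_ne_zero_iff.mpr hξ
  set a : ℝ := ‖ξ‖⁻¹ with ha
  have ha0 : a ≠ 0 := inv_ne_zero hnorm
  have hva : ‖a • ξ‖ = 1 := by
    rw [norm_smul, ha, norm_inv, norm_norm]
    field_simp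
  have hmem : a • ξ ∈ Metric.sphere (0 : Fin n → ℝ) 1 := by
    simpa [Metric.mem_sphere] using hva
  have heq : f (a • ξ) = f ξ := by
    rw [hf]
    simp only [quad_smul]
    rw [mul_div_mul_left _ _ (mul_ne_zero ha0 ha0)]
  calc f ξ = f (a • ξ) := heq.symm
    _ ≤ f u := hmax _ hmem

/-- with λ_max(β) the largest generalized eigenvalue of
Kξ = λ(M+βM_Γ)ξ and Δt_crit(β) = 2/√(λ_max(β)), β ≥ 0 implies
Δt_crit(β) ≥ Δt_crit(0). -/
theorem stmt_14 {n : ℕ} (M MΓ K : Matrix (Fin n) (Fin n) ℝ)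
    (hM : M.PosDef) (hMΓ : MΓ.PosSemidef) (hK : K.PosSemidef) (hK0 : K ≠ 0)
    (lamMax : ℝ → ℝ)
    (hlam : ∀ β, lamMax β = sSup (rayleighSet K (M + β • MΓ)))
    (dtCrit : ℝ → ℝ) (hdt : ∀ β, dtCrit β = 2 / Real.sqrt (lamMax β))
    (β : ℝ) (hβ : 0 ≤ β) :
    dtCrit 0 ≤ dtCrit β := by
  obtain ⟨C, hC⟩ := rayleigh_bddAbove K M hM
  have hMq : ∀ ξ : Fin n → ℝ, ξ ≠ 0 → 0 < ξ ⬝ᵥ M.mulVec ξ := by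
    intro ξ hξ; simpa using hM.dotProduct_mulVec_pos hξ
  have hKq : ∀ ξ : Fin n → ℝ, 0 ≤ ξ ⬝ᵥ K.mulVec ξ := by
    intro ξ; simpa using hK.dotProduct_mulVec_nonneg ξ
  have hΓq : ∀ ξ : Fin n → ℝ, 0 ≤ ξ ⬝ᵥ MΓ.mulVec ξ := by
    intro ξ; simpa using hMΓ.dotProduct_mulVec_nonneg ξ
  -- denominator comparison for any β' ≥ 0
  have hden : ∀ (β' : ℝ), 0 ≤ β' → ∀ ξ : Fin n → ℝ,
      ξ ⬝ᵥ M.mulVec ξ ≤ ξ ⬝ᵥ (M + β' • MΓ).mulVec ξ := by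
    intro β' hβ' ξ
    have : ξ ⬝ᵥ (M + β' • MΓ).mulVec ξ
        = ξ ⬝ᵥ M.mulVec ξ + β' * (ξ ⬝ᵥ MΓ.mulVec ξ) := by
      rw [Matrix.add_mulVec, dotProduct_add, Matrix.smul_mulVec,
        dotProduct_smul, smul_eq_mul]
    rw [this]
    nlinarith [hΓq ξ]
  -- each element of rayleighSet K (M + β'•MΓ) is ≤ the corresponding one for M, ≤ C
  have hmemle : ∀ (β' : ℝ), 0 ≤ β' → ∀ r ∈ rayleighSet K (M + β' • MΓ),
      ∃ ξ : Fin n → ℝ, ξ ≠ 0 ∧ r ≤ (ξ ⬝ᵥ K.mulVec ξ) / (ξ ⬝ᵥ M.mulVec ξ) := by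
    rintro β' hβ' r ⟨ξ, hξ, rfl⟩
    refine ⟨ξ, hξ, ?_⟩
    exact div_le_div_of_nonneg_left (hKq ξ) (hMq ξ hξ) (hden β' hβ' ξ)
  have hub : ∀ (β' : ℝ), 0 ≤ β' → ∀ r ∈ rayleighSet K (M + β' • MΓ), r ≤ C := by
    intro β' hβ' r hr
    obtain ⟨ξ, hξ, hle⟩ := hmemle β' hβ' r hr
    exact hle.trans (hC ξ hξ)
  have hbdd : ∀ (β' : ℝ), 0 ≤ β' → BddAbove (rayleighSet K (M + β' • MΓ)) :=
    fun β' hβ' => ⟨C, fun r hr => hub β' hβ' r hr⟩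
  -- positivity of lamMax
  obtain ⟨ξ₀, hξ₀, hq₀⟩ := exists_pos_quad hK hK0
  have hposlam : ∀ (β' : ℝ), 0 ≤ β' → 0 < lamMax β' := by
    intro β' hβ'
    have hd : 0 < ξ₀ ⬝ᵥ (M + β' • MΓ).mulVec ξ₀ :=
      lt_of_lt_of_le (hMq ξ₀ hξ₀) (hden β' hβ' ξ₀)
    have hmem : (ξ₀ ⬝ᵥ K.mulVec ξ₀) / (ξ₀ ⬝ᵥ (M + β' • MΓ).mulVec ξ₀)
        ∈ rayleighSet K (M + β' • MΓ) := ⟨ξ₀, hξ₀, rfl⟩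
    have : 0 < (ξ₀ ⬝ᵥ K.mulVec ξ₀) / (ξ₀ ⬝ᵥ (M + β' • MΓ).mulVec ξ₀) :=
      div_pos hq₀ hd
    calc (0:ℝ) < _ := this
      _ ≤ sSup (rayleighSet K (M + β' • MΓ)) := le_csSup (hbdd β' hβ') hmem
      _ = lamMax β' := (hlam β').symm
  have h0 : 0 < lamMax 0 := hposlam 0 le_rfl
  have hb : 0 < lamMax β := hposlam β hβ
  -- lamMax β ≤ lamMax 0
  have hle : lamMax β ≤ lamMax 0 := by
    rw [hlam β, hlam 0]
    apply Real.sSup_le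
    · intro r hr
      obtain ⟨ξ, hξ, hle⟩ := hmemle β hβ r hr
      refine hle.trans (le_csSup ?_ ?_)
      · have := hbdd 0 le_rfl
        simpa using this
      · have : (ξ ⬝ᵥ K.mulVec ξ) / (ξ ⬝ᵥ M.mulVec ξ)
            ∈ rayleighSet K (M + (0:ℝ) • MΓ) := by
          refine ⟨ξ, hξ, ?_⟩
          simp
        simpa using this
    · have := hposlam 0 le_rfl
      rw [hlam 0] at this
      simpa using this.le
  -- finish
  rw [hdt 0, hdt β]
  have hsb : 0 < Real.sqrt (lamMax β) := Real.sqrt_pos.mpr hb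
  have hss : Real.sqrt (lamMax β) ≤ Real.sqrt (lamMax 0) := Real.sqrt_le_sqrt hle
  exact div_le_div_of_nonneg_left (by norm_num) hsb hss
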